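/- If in a commutative diagram of abelian groups with middle row exact, consisting of homomorphisms A₂ → A₃, i₂ : A₂ → B₂, i₃ : A₃ → B₃, B₁ → B₂ → B₃ (exact at B₂), i₁ : B₁ → C₁, i₄ : B₂ → C₂, C₁ → C₂, the images i₁(B₁) and i₃(A₃) are finitely generated, then the image of the composite i₄ ∘ i₂ : A₂ → C₂ is finitely generated. -/

import Mathlib

/-- A subgroup of an abelian group that is contained in a finitely generated subgroup is
itself finitely generated (since `ℤ` is Noetherian). -/
lemma addSubgroup_fg_of_le {M : Type} [AddCommGroup M] {H K : AddSubgroup M}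
    (hK : K.FG) (h : H ≤ K) : H.FG := by
  set N : Submodule ℤ M := AddSubgroup.toIntSubmodule K with hN
  have hK' : N.FG := by
    rw [Submodule.fg_iff_addSubgroup_fg]
    exact hK
  haveI := isNoetherian_of_fg_of_noetherian N hK'
  have h' : AddSubgroup.toIntSubmodule H ≤ N :=
    (AddSubgroup.toIntSubmodule : AddSubgroup M ≃o Submodule ℤ M).monotone h
  have hfg : (AddSubgroup.toIntSubmodule H).FG := by
    have := (IsNoetherian.noetherian
      (Submodule.comap N.subtype (AddSubgroup.toIntSubmodule H))).map N.subtype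
    rwa [Submodule.map_comap_subtype, inf_eq_right.mpr h'] at this
  rw [Submodule.fg_iff_addSubgroup_fg] at hfg
  exact hfg

/-- The image of a finitely generated subgroup is finitely generated. -/
lemma addSubgroup_fg_map {M N : Type} [AddCommGroup M] [AddCommGroup N]
    {H : AddSubgroup M} (hH : H.FG) (f : M →+ N) : (H.map f).FG := by
  classical
  obtain ⟨S, hS⟩ := hH
  exact ⟨S.image f, by rw [Finset.coe_image, ← AddMonoidHom.map_closure, hS]⟩

/-- The sup of two finitely generated subgroups is finitely generated. -/
lemma addSubgroup_fg_sup {M : Type} [AddCommGroup M] {H K : AddSubgroup M}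
    (hH : H.FG) (hK : K.FG) : (H ⊔ K).FG := by
  classical
  obtain ⟨S, hS⟩ := hH
  obtain ⟨T, hT⟩ := hK
  exact ⟨S ∪ T, by rw [Finset.coe_union, AddSubgroup.closure_union, hS, hT]⟩

/-- In a commutative diagram of abelian groups with exact middle row `B₁ → B₂ → B₃`, if the
images of `i₁ : B₁ → C₁` and `i₃ : A₃ → B₃` are finitely generated, then so is the image of
`i₄ ∘ i₂ : A₂ → C₂`. -/
theorem stmt1 {A₂ A₃ B₁ B₂ B₃ C₁ C₂ : Type}
    [AddCommGroup A₂] [AddCommGroup A₃] [AddCommGroup B₁] [AddCommGroup B₂]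
    [AddCommGroup B₃] [AddCommGroup C₁] [AddCommGroup C₂]
    (a : A₂ →+ A₃) (i₂ : A₂ →+ B₂) (i₃ : A₃ →+ B₃)
    (b₁ : B₁ →+ B₂) (b₂ : B₂ →+ B₃) (i₁ : B₁ →+ C₁) (i₄ : B₂ →+ C₂) (c : C₁ →+ C₂)
    (hsq₁ : b₂.comp i₂ = i₃.comp a)
    (hsq₂ : i₄.comp b₁ = c.comp i₁)
    (hexact : Function.Exact b₁ b₂)
    (h₁ : i₁.range.FG) (h₃ : i₃.range.FG) :
    (i₄.comp i₂).range.FG := by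
  classical
  -- The image of `b₂ ∘ i₂` is contained in the image of `i₃`, hence finitely generated.
  have hle : (b₂.comp i₂).range ≤ i₃.range := by
    rintro _ ⟨x, rfl⟩
    exact ⟨a x, by rw [← AddMonoidHom.comp_apply, ← hsq₁]⟩
  obtain ⟨S, hS⟩ := addSubgroup_fg_of_le h₃ hle
  -- Choose preimages in `A₂` for the generators `S`.
  have hSmem : ∀ s ∈ (S : Set B₃), ∃ x : A₂, b₂ (i₂ x) = s := by
    intro s hs
    have : s ∈ (b₂.comp i₂).range := by
      rw [← hS]; exact AddSubgroup.subset_closure hs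
    obtain ⟨x, hx⟩ := this
    exact ⟨x, hx⟩
  choose! lift hlift using hSmem
  set T : Set B₂ := (fun s => i₂ (lift s)) '' (S : Set B₃) with hT
  -- `closure S = map b₂ (closure T)`.
  have hmapT : AddSubgroup.map b₂ (AddSubgroup.closure T) = AddSubgroup.closure (S : Set B₃) := by
    rw [hT, AddMonoidHom.map_closure, ← Set.image_comp]
    congr 1
    exact Set.EqOn.image_eq_self (fun s hs => hlift s hs)
  -- key containment: `i₂.range ≤ closure T ⊔ b₁.range`.
  have hkey : i₂.range ≤ AddSubgroup.closure T ⊔ b₁.range := by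
    have h1 : i₂.range ≤ AddSubgroup.comap b₂ (AddSubgroup.closure (S : Set B₃)) := by
      rintro _ ⟨x, rfl⟩
      have : b₂ (i₂ x) ∈ (b₂.comp i₂).range := ⟨x, rfl⟩
      rw [← hS] at this
      exact this
    rw [← hmapT, ← hexact.addMonoidHom_ker_eq] at *
    calc i₂.range ≤ AddSubgroup.comap b₂ (AddSubgroup.map b₂ (AddSubgroup.closure T)) := h1
      _ = AddSubgroup.closure T ⊔ b₂.ker := AddSubgroup.comap_map_eq b₂ _
  -- transport along `i₄`.
  have hrange : (i₄.comp i₂).range ≤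
      AddSubgroup.closure (i₄ '' T) ⊔ AddSubgroup.map c i₁.range := by
    rw [AddMonoidHom.range_comp]
    intro z hz
    obtain ⟨y, hy, rfl⟩ := hz
    have : i₄ y ∈ AddSubgroup.map i₄ (AddSubgroup.closure T ⊔ b₁.range) :=
      AddSubgroup.mem_map_of_mem i₄ (hkey hy)
    rw [AddSubgroup.map_sup, AddMonoidHom.map_closure] at this
    have heq : AddSubgroup.map i₄ b₁.range = AddSubgroup.map c i₁.range := by
      rw [← AddMonoidHom.range_comp, ← AddMonoidHom.range_comp, hsq₂]
    rwa [heq] at this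
  -- the right-hand side is finitely generated.
  have hfgT : (AddSubgroup.closure (i₄ '' T)).FG := by
    refine ⟨(S.image (fun s => i₄ (i₂ (lift s)))), ?_⟩
    congr 1
    rw [Finset.coe_image, hT, ← Set.image_comp]
    rfl
  exact addSubgroup_fg_of_le
    (addSubgroup_fg_sup hfgT (addSubgroup_fg_map h₁ c)) hrange
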